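/- Fix n ≥ 2 and let R_w ⊆ {0,1}^{n+2} be the weak base relation of IS^n_11: R_w(x₁,…,x_n, y, c₀) ⟺ ¬(x₁∧…∧x_n) ∧ (¬y → (¬x₁∧…∧¬x_n)) ∧ (c₀ = 0). Define the n-ary partial operation f whose domain is {e₁,…,e_n} ∪ {0^n}, where e_i is the i-th standard unit vector in {0,1}^n, with f(e_i) = 1 for all i and f(0^n) = 0. Then f preserves R_w but does not preserve the relation NAND^n = {0,1}^n \ {1^n}. -/
import Mathlib


/-- The weak base relation of `IS^n_11`: coordinates `0..n-1` are the `xᵢ`,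
coordinate `n` is `y`, coordinate `n+1` is `c₀`. -/
def RwS (n : ℕ) (t : Fin (n + 2) → Bool) : Prop :=
  (∃ i : Fin n, t (i.castLE (by omega)) = false) ∧
  (t ⟨n, by omega⟩ = false → ∀ i : Fin n, t (i.castLE (by omega)) = false) ∧
  t ⟨n + 1, by omega⟩ = false

/-- Domain of the partial `n`-ary operation: the unit vectors and the zero
vector. -/
def unitDom (n : ℕ) : Set (Fin n → Bool) :=
  {v | ∀ j, v j = false} ∪
  {v | ∃ j, v j = true ∧ ∀ j' ≠ j, v j' = false}

/-- `f v = 1` iff `v` is not the zero vector (so `f(eᵢ) = 1`, `f(0) = 0`). -/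
def fU {n : ℕ} (v : Fin n → Bool) : Bool := decide (∃ j, v j = true)

/-- NAND^n: all tuples except the all-ones tuple. -/
def NAND (n : ℕ) : Set (Fin n → Bool) := {v | ∃ i, v i = false}

lemma fU_eq_false_iff {n : ℕ} (v : Fin n → Bool) :
    fU v = false ↔ ∀ j, v j = false := by
  simp [fU]

lemma fU_eq_true_iff {n : ℕ} (v : Fin n → Bool) :
    fU v = true ↔ ∃ j, v j = true := by
  simp [fU]

/-- The partial operation `f` preserves the weak base of `IS^n_11` but not
`NAND^n`. -/
theorem stmt_16 (n : ℕ) (hn : 2 ≤ n) :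
    (∀ T : Fin n → (Fin (n + 2) → Bool), (∀ r, RwS n (T r)) →
      (∀ j : Fin (n + 2), (fun r => T r j) ∈ unitDom n) →
      RwS n (fun j => fU (fun r => T r j))) ∧
    ¬ (∀ T : Fin n → (Fin n → Bool), (∀ r, T r ∈ NAND n) →
      (∀ j : Fin n, (fun r => T r j) ∈ unitDom n) →
      (fun j => fU (fun r => T r j)) ∈ NAND n) := by
  constructor
  · intro T hRow hCol
    refine ⟨?_, ?_, ?_⟩
    · -- some x-column is all false
      by_contra h
      push_neg at h
      -- each x-column is a unit vector; let σ i be the row of the unique 1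
      have hunit : ∀ i : Fin n, ∃ r : Fin n,
          T r (i.castLE (by omega)) = true ∧
          ∀ r' ≠ r, T r' (i.castLE (by omega)) = false := by
        intro i
        have hne := h i
        rcases hCol (i.castLE (by omega)) with hz | hu
        · exact absurd ((fU_eq_false_iff _).2 hz) hne
        · exact hu
      choose σ hσ1 hσ2 using hunit
      by_cases hconst : ∀ i i' : Fin n, σ i = σ i'
      · -- σ constant: row σ 0 has all x's true, contradiction
        have i0 : Fin n := ⟨0, by omega⟩
        obtain ⟨i, hi⟩ := (hRow (σ ⟨0, by omega⟩)).1
        have := hσ1 i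
        rw [hconst i ⟨0, by omega⟩] at this
        rw [this] at hi
        exact absurd hi (by simp)
      · push_neg at hconst
        obtain ⟨i1, i2, hne⟩ := hconst
        -- rows σ i1, σ i2 each have a true x, so their y is true
        have hy : ∀ i : Fin n, T (σ i) ⟨n, by omega⟩ = true := by
          intro i
          by_contra hy
          have hy' : T (σ i) ⟨n, by omega⟩ = false := by
            cases hb : T (σ i) ⟨n, by omega⟩ <;> simp_all
          have := (hRow (σ i)).2.1 hy' i
          rw [hσ1 i] at this
          exact absurd this (by simp)
        -- column y is in unitDom but has two distinct trues
        rcases hCol ⟨n, by omega⟩ with hz | ⟨j, hj1, hj2⟩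
        · have := hz (σ i1)
          simp [hy i1] at this
        · have h1 : σ i1 = j := by
            by_contra hc
            have := hj2 (σ i1) hc
            simp [hy i1] at this
          have h2 : σ i2 = j := by
            by_contra hc
            have := hj2 (σ i2) hc
            simp [hy i2] at this
          exact hne (h1.trans h2.symm)
    · intro hyf i
      have hyz := (fU_eq_false_iff _).1 hyf
      rw [fU_eq_false_iff]
      intro r
      exact (hRow r).2.1 (hyz r) i
    · rw [fU_eq_false_iff]
      intro r
      exact (hRow r).2.2
  · intro hpres
    have h := hpres (fun r j => decide (r = j))
      (fun r => by
        by_cases h0 : r.1 = 0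
        · exact ⟨⟨1, by omega⟩, by simp [Fin.ext_iff, h0]⟩
        · exact ⟨⟨0, by omega⟩, by simp [Fin.ext_iff]; omega⟩)
      (fun j => Or.inr ⟨j, by simp, fun j' hj' => by simp [Fin.ext_iff] at hj' ⊢; omega⟩)
    obtain ⟨i, hi⟩ := h
    rw [fU_eq_false_iff] at hi
    have := hi i
    simp at this
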